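/- Let T be a complete first-order theory and (aᵢ : i ∈ ℚ) an indiscernible sequence of single elements in a model of T which is not totally indiscernible. Then there exist indices i₀ < ⋯ < i_m < i_* < j_* < j₀ < ⋯ < j_n in ℚ such that, with A₀ = {a_{i₀},…,a_{i_m}, a_{j₀},…,a_{j_n}}, we have tp(a_{i_*}, a_{j_*}/A₀) ≠ tp(a_{j_*}, a_{i_*}/A₀); and for any formula ψ(x,y) with parameters from A₀ lying in the first type but not the second, ψ(x;y) — a formula in two single variables with parameters — has the order property. -/
import Mathlib


open FirstOrder FirstOrder.Language

universe u v

/-- An elementary extension of `M`: a structure together with an elementary embedding of `M`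
into it. -/
structure ElemExt (L : FirstOrder.Language.{u, v}) (M : Type (max u v)) [L.Structure M] where
  carrier : Type (max u v)
  [str : L.Structure carrier]
  emb : M ↪ₑ[L] carrier

attribute [instance] ElemExt.str

/-- A formula `φ(x̄; ȳ)` (without parameters) has the order property with respect to a theory
`T` if in some model of `T` there are sequences `(āᵢ : i < ω)` and `(b̄ⱼ : j < ω)` such that
`φ(āᵢ; b̄ⱼ)` holds iff `i < j`. -/
def FormulaHasOP {L : FirstOrder.Language.{u, v}} (T : L.Theory) {α β : Type*}
    (φ : L.Formula (α ⊕ β)) : Prop :=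
  ∃ (N : FirstOrder.Language.Theory.ModelType.{u, v, max u v} T)
    (a : ℕ → α → N) (b : ℕ → β → N),
    ∀ i j : ℕ, φ.Realize (Sum.elim (a i) (b j)) ↔ i < j

/-- A formula `φ(x̄; ȳ)` (without parameters) has the independence property with respect to a
theory `T` if in some model of `T` there are tuples `(āᵢ : i < ω)` and `(b̄_S : S ⊆ ω)` such
that `φ(āᵢ; b̄_S)` holds iff `i ∈ S`. -/
def FormulaHasIP {L : FirstOrder.Language.{u, v}} (T : L.Theory) {α β : Type*}
    (φ : L.Formula (α ⊕ β)) : Prop :=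
  ∃ (N : FirstOrder.Language.Theory.ModelType.{u, v, max u v} T)
    (a : ℕ → α → N) (b : Set ℕ → β → N),
    ∀ (i : ℕ) (S : Set ℕ), φ.Realize (Sum.elim (a i) (b S)) ↔ i ∈ S

/-- A formula `φ(x̄; ȳ)` with parameters `c` from `M` has the order property if in some
elementary extension of `M` there are sequences `(āᵢ : i < ω)` and `(b̄ⱼ : j < ω)` such that
`φ(āᵢ; b̄ⱼ; c)` holds iff `i < j`. -/
def HasOPWithParams {L : FirstOrder.Language.{u, v}} {M : Type (max u v)} [L.Structure M]
    {α β γ : Type*} (φ : L.Formula ((α ⊕ β) ⊕ γ)) (c : γ → M) : Prop :=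
  ∃ (N : ElemExt L M) (a : ℕ → α → N.carrier) (b : ℕ → β → N.carrier),
    ∀ i j : ℕ, φ.Realize (Sum.elim (Sum.elim (a i) (b j)) (N.emb ∘ c)) ↔ i < j

/-- A formula `φ(x̄; ȳ)` with parameters `c` from `M` has the independence property if in some
elementary extension of `M` there are tuples `(āᵢ : i < ω)` and `(b̄_S : S ⊆ ω)` such that
`φ(āᵢ; b̄_S; c)` holds iff `i ∈ S`. -/
def HasIPWithParams {L : FirstOrder.Language.{u, v}} {M : Type (max u v)} [L.Structure M]
    {α β γ : Type*} (φ : L.Formula ((α ⊕ β) ⊕ γ)) (c : γ → M) : Prop :=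
  ∃ (N : ElemExt L M) (a : ℕ → α → N.carrier) (b : Set ℕ → β → N.carrier),
    ∀ (i : ℕ) (S : Set ℕ), φ.Realize (Sum.elim (Sum.elim (a i) (b S)) (N.emb ∘ c)) ↔ i ∈ S

/-- The family of tuples `(c̄ᵢ : i ∈ ι)` is an indiscernible sequence over the set `A`:
any two strictly increasing tuples of indices realize the same formulas with parameters
from `A`. -/
def IsIndiscernibleOver {L : FirstOrder.Language.{u, v}} {M : Type (max u v)} [L.Structure M]
    {ι : Type*} [LinearOrder ι] {γ : Type*} (c : ι → γ → M) (A : Set M) : Prop :=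
  ∀ (n m : ℕ) (i j : Fin n → ι), StrictMono i → StrictMono j →
    ∀ p : Fin m → M, (∀ l, p l ∈ A) →
      ∀ φ : L.Formula (Fin n × γ ⊕ Fin m),
        φ.Realize (Sum.elim (fun v : Fin n × γ => c (i v.1) v.2) p) ↔
          φ.Realize (Sum.elim (fun v : Fin n × γ => c (j v.1) v.2) p)

/-- The family of tuples `(c̄ᵢ : i ∈ ι)` is an indiscernible sequence. -/
def IsIndiscernible {L : FirstOrder.Language.{u, v}} {M : Type (max u v)} [L.Structure M]
    {ι : Type*} [LinearOrder ι] {γ : Type*} (c : ι → γ → M) : Prop :=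
  IsIndiscernibleOver (L := L) c ∅

/-- Two families of tuples are mutually indiscernible if each is indiscernible over the union
of the tuples of the other. -/
def MutuallyIndiscernible {L : FirstOrder.Language.{u, v}} {M : Type (max u v)} [L.Structure M]
    {ι : Type*} [LinearOrder ι] {γ δ : Type*} (a : ι → γ → M) (b : ι → δ → M) : Prop :=
  IsIndiscernibleOver (L := L) a (⋃ i, Set.range (b i)) ∧
    IsIndiscernibleOver (L := L) b (⋃ i, Set.range (a i))

/-- The family of tuples `(c̄ᵢ : i ∈ ι)` is totally indiscernible: any two tuples of distinct
indices (in any order) realize the same formulas. -/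
def IsTotallyIndiscernible {L : FirstOrder.Language.{u, v}} {M : Type (max u v)} [L.Structure M]
    {ι : Type*} [LinearOrder ι] {γ : Type*} (c : ι → γ → M) : Prop :=
  ∀ (n : ℕ) (i j : Fin n → ι), Function.Injective i → Function.Injective j →
    ∀ φ : L.Formula (Fin n × γ),
      φ.Realize (fun v : Fin n × γ => c (i v.1) v.2) ↔
        φ.Realize (fun v : Fin n × γ => c (j v.1) v.2)

/-- A set in a linear order is dense (in the order) and unbounded above and below. -/
def DenseUnbounded {α : Type*} [LinearOrder α] (S : Set α) : Prop :=
  (∀ x y : α, x < y → ∃ z ∈ S, x < z ∧ z < y) ∧ (∀ x : α, ∃ z ∈ S, z < x) ∧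
    (∀ x : α, ∃ z ∈ S, x < z)

/-- `R : α → β → Prop` presents (a structure isomorphic to) the random ordered bipartite
graph `G*`, i.e. the Fraïssé limit of finite ordered bipartite graphs: both parts are
countable nonempty dense linear orders without endpoints and the edge relation is generic. -/
def IsRandomOBG {α β : Type*} [LinearOrder α] [LinearOrder β] (R : α → β → Prop) : Prop :=
  Countable α ∧ Countable β ∧ Nonempty α ∧ Nonempty β ∧
    (∀ F G : Finset β, Disjoint F G →
      DenseUnbounded {x : α | (∀ f ∈ F, R x f) ∧ ∀ g ∈ G, ¬R x g}) ∧
    (∀ F G : Finset α, Disjoint F G →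
      DenseUnbounded {y : β | (∀ f ∈ F, R f y) ∧ ∀ g ∈ G, ¬R g y})

/-- An element of the random ordered bipartite graph `G*`, whose two parts `U(G*)` and
`V(G*)` are both identified with `ℚ`: `Sum.inl` is the `U`-part, `Sum.inr` the `V`-part. -/
abbrev GStarIdx : Type := ℚ ⊕ ℚ

/-- The index of the pair `(s, q)`: in the `U`-part if `s = true`, in the `V`-part
otherwise. -/
def mkIdx {n : ℕ} (s : Fin n → Bool) (q : Fin n → ℚ) : Fin n → GStarIdx := fun k =>
  bif s k then Sum.inl (q k) else Sum.inr (q k)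

/-- Two pairs of elements of `G*` (with edge relation `R`) have the same quantifier-free
`L*`-type, where `L* = {U, ≤_U, V, ≤_V, R}`. -/
def SamePairType (R : ℚ → ℚ → Prop) :
    GStarIdx → GStarIdx → GStarIdx → GStarIdx → Prop
  | Sum.inl p, Sum.inl q, Sum.inl p', Sum.inl q' => (p ≤ q ↔ p' ≤ q') ∧ (q ≤ p ↔ q' ≤ p')
  | Sum.inr p, Sum.inr q, Sum.inr p', Sum.inr q' => (p ≤ q ↔ p' ≤ q') ∧ (q ≤ p ↔ q' ≤ p')
  | Sum.inl p, Sum.inr q, Sum.inl p', Sum.inr q' => R p q ↔ R p' q'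
  | Sum.inr q, Sum.inl p, Sum.inr q', Sum.inl p' => R p q ↔ R p' q'
  | _, _, _, _ => False

/-- Two tuples of elements of `G*` (with edge relation `R`) have the same quantifier-free
`L*`-type. -/
def SameQfType (R : ℚ → ℚ → Prop) {n : ℕ} (i j : Fin n → GStarIdx) : Prop :=
  ∀ k l : Fin n, SamePairType R (i k) (i l) (j k) (j l)

/-- The variables carried by a coordinate of a mixed tuple: a `U`-index carries an `x̄`-tuple
of length `da`, a `V`-index a `ȳ`-tuple of length `db`. -/
def MixVar (da db : ℕ) : Bool → Type
  | true => Fin da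
  | false => Fin db

/-- Choose the `a`-tuple or the `b`-tuple according to the side. -/
def pickSide {M : Type*} {da db : ℕ} (a : Fin da → M) (b : Fin db → M) :
    (s : Bool) → MixVar da db s → M
  | true, w => a w
  | false, w => b w

/-- The family `(āᵢ : i ∈ U(G*) ≅ ℚ) ∪ (b̄ⱼ : j ∈ V(G*) ≅ ℚ)`, indexed by the random ordered
bipartite graph `G*` with edge relation `R`, is `L*`-indiscernible: index tuples with the same
quantifier-free `L*`-type in `G*` realize the same `L`-formulas in `M`. -/
def IsLStarIndiscernible {L : FirstOrder.Language.{u, v}} {M : Type (max u v)} [L.Structure M]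
    (R : ℚ → ℚ → Prop) {da db : ℕ} (a : ℚ → Fin da → M) (b : ℚ → Fin db → M) : Prop :=
  ∀ (n : ℕ) (s : Fin n → Bool) (q q' : Fin n → ℚ),
    SameQfType R (mkIdx s q) (mkIdx s q') →
      ∀ φ : L.Formula ((k : Fin n) × MixVar da db (s k)),
        φ.Realize (fun v => pickSide (a (q v.1)) (b (q v.1)) (s v.1) v.2) ↔
          φ.Realize (fun v => pickSide (a (q' v.1)) (b (q' v.1)) (s v.1) v.2)

section OPAux

variable {L : FirstOrder.Language.{u, v}} {M : Type (max u v)} [L.Structure M]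

private lemma realize_congr' {α : Type*} (χ : L.Formula α) {f g : α → M} (h : f = g) :
    χ.Realize f ↔ χ.Realize g := by rw [h]

private lemma relp_realize {n : ℕ} (χ : L.Formula (Fin n × Fin 1)) (τ : Fin n → Fin n)
    (t : Fin n → M) :
    (χ.relabel (fun p : Fin n × Fin 1 => ((τ p.1, p.2) : Fin n × Fin 1))).Realize
        (fun p : Fin n × Fin 1 => t p.1) ↔
      χ.Realize (fun p : Fin n × Fin 1 => t (τ p.1)) := by
  rw [Formula.realize_relabel]; exact Iff.rfl

private lemma aux_strict {a : ℚ → M}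
    (hind : IsIndiscernible (L := L) (fun i (_ : Fin 1) => a i))
    {N : ℕ} {v v' : Fin N → ℚ} (hv : StrictMono v) (hv' : StrictMono v')
    (χ : L.Formula (Fin N × Fin 1)) :
    χ.Realize (fun p => a (v p.1)) ↔ χ.Realize (fun p => a (v' p.1)) := by
  have h := hind N 0 v v' hv hv' (fun x => x.elim0) (fun l => l.elim0)
      (χ.relabel Sum.inl)
  simpa [Formula.realize_relabel, Function.comp] using h

variable {L : FirstOrder.Language.{u, v}} {M : Type (max u v)} [L.Structure M]

private lemma aux_mono {a : ℚ → M}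
    (hind : IsIndiscernible (L := L) (fun i (_ : Fin 1) => a i)) :
    ∀ (N : ℕ) (v v' : Fin N → ℚ), Monotone v → Monotone v' →
      (∀ x y, v x ≤ v y ↔ v' x ≤ v' y) →
      ∀ χ : L.Formula (Fin N × Fin 1),
        χ.Realize (fun p => a (v p.1)) ↔ χ.Realize (fun p => a (v' p.1)) := by
  intro N
  induction N with
  | zero =>
      intro v v' _ _ _ χ
      exact realize_congr' χ (funext fun p => p.1.elim0)
  | succ N ih =>
      intro v v' hv hv' hm χ
      have hval : ∀ x y, v x = v y ↔ v' x = v' y := by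
        intro x y
        constructor
        · intro h; exact le_antisymm ((hm x y).1 h.le) ((hm y x).1 h.ge)
        · intro h; exact le_antisymm ((hm x y).2 h.le) ((hm y x).2 h.ge)
      by_cases hinj : Function.Injective v
      · have hinj' : Function.Injective v' := fun x y h => hinj ((hval x y).2 h)
        exact aux_strict hind (hv.strictMono_of_injective hinj)
          (hv'.strictMono_of_injective hinj') χ
      · rw [Function.Injective] at hinj
        push_neg at hinj
        obtain ⟨x0, y0, hxy0, hne0⟩ := hinj
        obtain ⟨x, y, hlt, hxy⟩ : ∃ x y : Fin (N+1), x < y ∧ v x = v y := by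
          rcases lt_or_gt_of_ne hne0 with h | h
          · exact ⟨x0, y0, h, hxy0⟩
          · exact ⟨y0, x0, h, hxy0.symm⟩
        have h1 : x.val < y.val := hlt
        have hyN : y.val < N + 1 := y.isLt
        have hxN : x.val < N := by omega
        have hadj : v x = v ⟨x.val + 1, by omega⟩ :=
          le_antisymm (hv (Fin.le_def.mpr (Nat.le_succ _)))
            ((hv (show (⟨x.val + 1, by omega⟩ : Fin (N+1)) ≤ y from
              Fin.le_def.mpr (by simp; omega))).trans hxy.ge)
        have hadj' : v' x = v' ⟨x.val + 1, by omega⟩ := (hval _ _).1 hadj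
        let ins : Fin N → Fin (N+1) := fun j =>
          if j.val ≤ x.val then ⟨j.val, by omega⟩ else ⟨j.val + 1, by have := j.isLt; omega⟩
        let k : Fin (N+1) → Fin N := fun j =>
          if h : j.val ≤ x.val then ⟨j.val, by omega⟩ else ⟨j.val - 1, by have := j.isLt; omega⟩
        have hfac : ∀ (f : Fin (N+1) → ℚ), f x = f ⟨x.val + 1, by omega⟩ →
            ∀ j, f (ins (k j)) = f j := by
          intro f hf j
          by_cases hj : j.val ≤ x.val
          · simp only [ins, k, dif_pos hj, if_pos hj]
          · simp only [ins, k, dif_neg hj]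
            by_cases hj2 : j.val = x.val + 1
            · have e1 : (⟨j.val - 1, by have := j.isLt; omega⟩ : Fin N).val ≤ x.val := by
                simp; omega
              simp only [if_pos e1]
              have ex : (⟨(⟨j.val - 1, by have := j.isLt; omega⟩ : Fin N).val, by
                  have := j.isLt; omega⟩ : Fin (N+1)) = x := Fin.ext (by simp; omega)
              have ej : (⟨x.val + 1, by omega⟩ : Fin (N+1)) = j := Fin.ext (by simp; omega)
              rw [ex]
              rw [hf, ej]
            · have e1 : ¬ (⟨j.val - 1, by have := j.isLt; omega⟩ : Fin N).val ≤ x.val := by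
                simp; omega
              simp only [if_neg e1]
              exact congrArg f (Fin.ext (by simp; omega))
        have hinsmono : Monotone ins := by
          intro j j' hjj'
          have hj : j.val ≤ j'.val := hjj'
          simp only [ins]
          split_ifs <;> (rw [Fin.le_def]; simp <;> omega)
        have this0 := ih (v ∘ ins) (v' ∘ ins) (hv.comp hinsmono) (hv'.comp hinsmono)
          (fun p q => hm (ins p) (ins q))
          (χ.relabel (fun p : Fin (N+1) × Fin 1 => ((k p.1, p.2) : Fin N × Fin 1)))
        have conv : ∀ (f : Fin (N+1) → ℚ), f x = f ⟨x.val + 1, by omega⟩ →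
            ((χ.relabel (fun p : Fin (N+1) × Fin 1 => ((k p.1, p.2) : Fin N × Fin 1))).Realize
              (fun p : Fin N × Fin 1 => a ((f ∘ ins) p.1)) ↔
              χ.Realize (fun p : Fin (N+1) × Fin 1 => a (f p.1))) := by
          intro f hf
          rw [Formula.realize_relabel]
          exact realize_congr' χ (funext fun p => congrArg a (hfac f hf p.1))
        exact ((conv v hadj).symm.trans this0).trans (conv v' hadj')

private lemma aux_gen {a : ℚ → M}
    (hind : IsIndiscernible (L := L) (fun i (_ : Fin 1) => a i))
    {N : ℕ} (v v' : Fin N → ℚ) (hm : ∀ x y, v x ≤ v y ↔ v' x ≤ v' y)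
    (χ : L.Formula (Fin N × Fin 1)) :
    χ.Realize (fun p => a (v p.1)) ↔ χ.Realize (fun p => a (v' p.1)) := by
  have hval : ∀ x y, v x = v y ↔ v' x = v' y := by
    intro x y
    constructor
    · intro h; exact le_antisymm ((hm x y).1 h.le) ((hm y x).1 h.ge)
    · intro h; exact le_antisymm ((hm x y).2 h.le) ((hm y x).2 h.ge)
  set σ := Tuple.sort v with hσ
  have hsv : Monotone (v ∘ σ) := by rw [hσ]; exact Tuple.monotone_sort v
  have hprop := (Tuple.eq_sort_iff (f := v) (σ := σ)).mp hσ
  have hσ' : σ = Tuple.sort v' := by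
    rw [Tuple.eq_sort_iff]
    refine ⟨fun i j hij => (hm _ _).1 (hsv hij),
      fun i j hij he => hprop.2 i j hij ((hval _ _).2 he)⟩
  have hsv' : Monotone (v' ∘ σ) := by rw [hσ']; exact Tuple.monotone_sort v'
  have key := aux_mono hind N (v ∘ σ) (v' ∘ σ) hsv hsv' (fun p q => hm _ _)
    (χ.relabel (fun p : Fin N × Fin 1 => ((σ.symm p.1, p.2) : Fin N × Fin 1)))
  have conv : ∀ f : Fin N → ℚ,
      ((χ.relabel (fun p : Fin N × Fin 1 => ((σ.symm p.1, p.2) : Fin N × Fin 1))).Realize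
        (fun p : Fin N × Fin 1 => a ((f ∘ σ) p.1)) ↔
        χ.Realize fun p => a (f p.1)) := by
    intro f
    rw [Formula.realize_relabel]
    exact realize_congr' χ
      (funext fun p => congrArg (fun z => a (f z)) (σ.apply_symm_apply p.1))
  exact ((conv v).symm.trans key).trans (conv v')

private lemma exists_adjacent {a : ℚ → M}
    (hind : IsIndiscernible (L := L) (fun i (_ : Fin 1) => a i))
    (hnot : ¬ IsTotallyIndiscernible (L := L) (fun i (_ : Fin 1) => a i)) :
    ∃ (N : ℕ) (u : Fin N → ℚ) (χ : L.Formula (Fin N × Fin 1)) (q q' : Fin N),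
      StrictMono u ∧ q'.val = q.val + 1 ∧
      ¬ (χ.Realize (fun p => a (u (Equiv.swap q q' p.1))) ↔
          χ.Realize (fun p => a (u p.1))) := by
  by_contra hcon
  push_neg at hcon
  apply hnot
  intro n i j hi hj φ
  -- P ρ : swapping by ρ preserves realization along any strictly monotone tuple
  have hP : ∀ ρ : Equiv.Perm (Fin n), ∀ w : Fin n → ℚ, StrictMono w →
      ∀ ψ : L.Formula (Fin n × Fin 1),
        ψ.Realize (fun p => a (w (ρ p.1))) ↔ ψ.Realize (fun p => a (w p.1)) := by
    cases n with
    | zero =>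
        intro ρ w hw ψ
        exact realize_congr' ψ (funext fun p => p.1.elim0)
    | succ n₀ =>
        intro ρ
        have hmem : ρ ∈ Submonoid.closure
            (Set.range fun i : Fin n₀ => Equiv.swap i.castSucc i.succ) := by
          rw [Equiv.Perm.mclosure_swap_castSucc_succ]; trivial
        induction hmem using Submonoid.closure_induction with
        | mem x hx =>
            obtain ⟨i0, rfl⟩ := hx
            intro w hw ψ
            exact hcon (n₀+1) w ψ i0.castSucc i0.succ hw (by simp)
        | one =>
            intro w hw ψ
            exact realize_congr' ψ (funext fun p => by simp)
        | mul ρ₁ ρ₂ h₁ h₂ ih₁ ih₂ =>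
            intro w hw ψ
            calc ψ.Realize (fun p => a (w ((ρ₁ * ρ₂) p.1)))
                ↔ ψ.Realize (fun p => a (w (ρ₁ (ρ₂ p.1)))) :=
                  realize_congr' ψ (funext fun p => by rw [Equiv.Perm.mul_apply])
              _ ↔ (ψ.relabel (fun p : Fin (n₀+1) × Fin 1 =>
                    ((ρ₂ p.1, p.2) : Fin (n₀+1) × Fin 1))).Realize
                    (fun p => a (w (ρ₁ p.1))) :=
                  (relp_realize ψ ρ₂ (fun z => a (w (ρ₁ z)))).symm
              _ ↔ (ψ.relabel (fun p : Fin (n₀+1) × Fin 1 =>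
                    ((ρ₂ p.1, p.2) : Fin (n₀+1) × Fin 1))).Realize
                    (fun p => a (w p.1)) := ih₁ w hw _
              _ ↔ ψ.Realize (fun p => a (w (ρ₂ p.1))) :=
                  relp_realize ψ ρ₂ (fun z => a (w z))
              _ ↔ ψ.Realize (fun p => a (w p.1)) := ih₂ w hw ψ
  -- sort both tuples
  set σ := Tuple.sort i with hσ
  set τ := Tuple.sort j with hτ
  set u : Fin n → ℚ := i ∘ σ with hu
  set u' : Fin n → ℚ := j ∘ τ with hu'
  have hum : StrictMono u := by
    rw [hu, hσ]
    exact (Tuple.monotone_sort i).strictMono_of_injective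
      (hi.comp (Equiv.injective _))
  have hum' : StrictMono u' := by
    rw [hu', hτ]
    exact (Tuple.monotone_sort j).strictMono_of_injective
      (hj.comp (Equiv.injective _))
  set ρ : Equiv.Perm (Fin n) := τ.symm * σ with hρ
  calc φ.Realize (fun p : Fin n × Fin 1 => a (i p.1))
      ↔ φ.Realize (fun p : Fin n × Fin 1 => a (u (σ.symm p.1))) :=
        realize_congr' φ (funext fun p => by
          simp only [hu, Function.comp_apply, Equiv.apply_symm_apply])
    _ ↔ (φ.relabel (fun p : Fin n × Fin 1 =>
          ((σ.symm p.1, p.2) : Fin n × Fin 1))).Realize (fun p => a (u p.1)) :=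
        (relp_realize φ σ.symm (fun z => a (u z))).symm
    _ ↔ (φ.relabel (fun p : Fin n × Fin 1 =>
          ((σ.symm p.1, p.2) : Fin n × Fin 1))).Realize (fun p => a (u (ρ p.1))) :=
        (hP ρ u hum _).symm
    _ ↔ φ.Realize (fun p : Fin n × Fin 1 => a (u (ρ (σ.symm p.1)))) :=
        relp_realize φ σ.symm (fun z => a (u (ρ z)))
    _ ↔ φ.Realize (fun p : Fin n × Fin 1 => a (u (τ.symm p.1))) :=
        realize_congr' φ (funext fun p => by
          simp only [hρ, Equiv.Perm.mul_apply, Equiv.apply_symm_apply])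
    _ ↔ (φ.relabel (fun p : Fin n × Fin 1 =>
          ((τ.symm p.1, p.2) : Fin n × Fin 1))).Realize (fun p => a (u p.1)) :=
        (relp_realize φ τ.symm (fun z => a (u z))).symm
    _ ↔ (φ.relabel (fun p : Fin n × Fin 1 =>
          ((τ.symm p.1, p.2) : Fin n × Fin 1))).Realize (fun p => a (u' p.1)) :=
        aux_strict hind hum hum' _
    _ ↔ φ.Realize (fun p : Fin n × Fin 1 => a (u' (τ.symm p.1))) :=
        relp_realize φ τ.symm (fun z => a (u' z))
    _ ↔ φ.Realize (fun p : Fin n × Fin 1 => a (j p.1)) :=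
        realize_congr' φ (funext fun p => by
          simp only [hu', Function.comp_apply, Equiv.apply_symm_apply])

end OPAux

/-- If `(aᵢ : i ∈ ℚ)` is an indiscernible, not totally indiscernible, sequence
of single elements, then there are indices `i₀ < ⋯ < i_m < i⋆ < j⋆ < j₀ < ⋯ < j_n` such that,
with `A₀ = {a_{i₀}, …, a_{i_m}, a_{j₀}, …, a_{j_n}}`, the types `tp(a_{i⋆}, a_{j⋆}/A₀)` and
`tp(a_{j⋆}, a_{i⋆}/A₀)` differ, and every formula `ψ(x, y)` in two single variables with
parameters from `A₀` lying in the first type but not the second has the order property. -/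


theorem order_property_of_not_totally_indiscernible {L : FirstOrder.Language.{u, v}}
    (T : L.Theory) (hT : T.IsComplete)
    (M : Type (max u v)) [L.Structure M] [Nonempty M] (hM : M ⊨ T)
    (a : ℚ → M)
    (hind : IsIndiscernible (L := L) (fun i (_ : Fin 1) => a i))
    (hnot : ¬ IsTotallyIndiscernible (L := L) (fun i (_ : Fin 1) => a i)) :
    ∃ (m n : ℕ) (ii : Fin (m + 1) → ℚ) (jj : Fin (n + 1) → ℚ) (istar jstar : ℚ),
      StrictMono ii ∧ StrictMono jj ∧
      ii (Fin.last m) < istar ∧ istar < jstar ∧ jstar < jj 0 ∧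
      ¬ (∀ (k : ℕ) (ψ : L.Formula ((Fin 1 ⊕ Fin 1) ⊕ Fin k)) (c : Fin k → M),
          (∀ l, c l ∈ Set.range (fun l => a (ii l)) ∪ Set.range (fun l => a (jj l))) →
          (ψ.Realize (Sum.elim (Sum.elim (fun _ => a istar) (fun _ => a jstar)) c) ↔
            ψ.Realize (Sum.elim (Sum.elim (fun _ => a jstar) (fun _ => a istar)) c))) ∧
      ∀ (k : ℕ) (ψ : L.Formula ((Fin 1 ⊕ Fin 1) ⊕ Fin k)) (c : Fin k → M),
        (∀ l, c l ∈ Set.range (fun l => a (ii l)) ∪ Set.range (fun l => a (jj l))) →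
        ψ.Realize (Sum.elim (Sum.elim (fun _ => a istar) (fun _ => a jstar)) c) →
        ¬ ψ.Realize (Sum.elim (Sum.elim (fun _ => a jstar) (fun _ => a istar)) c) →
        HasOPWithParams ψ c := by
  obtain ⟨N, u, χ, q, q', hu, hqq, hne⟩ := exists_adjacent hind hnot
  have hq'N : q'.val < N := q'.isLt
  have hqN : q.val + 1 < N := by omega
  have hN0 : 0 < N := by omega
  set ii : Fin (q.val + 1) → ℚ := fun l =>
    if l.val = 0 then u ⟨0, hN0⟩ - 1
    else u ⟨l.val - 1, by have := l.isLt; omega⟩ with hii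
  set jj : Fin (N - q.val - 2 + 1) → ℚ := fun l =>
    if h : l.val = N - q.val - 2 then u ⟨N - 1, by omega⟩ + 1
    else u ⟨q.val + 2 + l.val, by have := l.isLt; omega⟩ with hjj
  have hii_lt : ∀ l, ii l < u q := by
    intro l
    have hl := l.isLt
    simp only [hii]
    split_ifs with h
    · have h0 : u ⟨0, hN0⟩ ≤ u q := hu.monotone (Fin.le_def.mpr (Nat.zero_le _))
      linarith
    · exact hu (Fin.lt_def.mpr (show l.val - 1 < q.val by omega))
  have hjj_gt : ∀ l, u q' < jj l := by
    intro l
    have hl := l.isLt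
    simp only [hjj]
    split_ifs with h
    · have h0 : u q' ≤ u ⟨N - 1, by omega⟩ :=
        hu.monotone (Fin.le_def.mpr (show q'.val ≤ N - 1 by omega))
      linarith
    · exact hu (Fin.lt_def.mpr (show q'.val < q.val + 2 + l.val by omega))
  have hiimono : StrictMono ii := by
    intro l l' hll'
    have h1 : l.val < l'.val := hll'
    have hl := l.isLt
    have hl' := l'.isLt
    simp only [hii]
    split_ifs with h2 h3 h3
    · exact absurd rfl (show ¬(0:ℕ) = 0 by omega)
    · have h0 : u ⟨0, hN0⟩ ≤ u ⟨l'.val - 1, by omega⟩ :=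
        hu.monotone (Fin.le_def.mpr (Nat.zero_le _))
      linarith
    · exact absurd rfl (show ¬(0:ℕ) = 0 by omega)
    · exact hu (Fin.lt_def.mpr (show l.val - 1 < l'.val - 1 by omega))
  have hjjmono : StrictMono jj := by
    intro l l' hll'
    have h1 : l.val < l'.val := hll'
    have hl := l.isLt
    have hl' := l'.isLt
    simp only [hjj]
    split_ifs with h2 h3 h3
    · exact absurd rfl (show ¬(0:ℕ) = 0 by omega)
    · exact absurd rfl (show ¬(0:ℕ) = 0 by omega)
    · have h0 : u ⟨q.val + 2 + l.val, by omega⟩ ≤ u ⟨N - 1, by omega⟩ :=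
        hu.monotone (Fin.le_def.mpr (show q.val + 2 + l.val ≤ N - 1 by omega))
      linarith
    · exact hu (Fin.lt_def.mpr (show q.val + 2 + l.val < q.val + 2 + l'.val by omega))
  have hcover : ∀ l : Fin N, l.val ≠ q.val → l.val ≠ q.val + 1 →
      (∃ l', ii l' = u l) ∨ (∃ l', jj l' = u l) := by
    intro l h1 h2
    have hl := l.isLt
    by_cases hlq : l.val < q.val
    · left
      refine ⟨⟨l.val + 1, by omega⟩, ?_⟩
      simp only [hii]
      rw [if_neg (show ¬(l.val + 1 = 0) by omega)]
      exact congrArg u (Fin.ext (show l.val + 1 - 1 = l.val by omega))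
    · have hgt : q.val + 1 < l.val := by omega
      right
      refine ⟨⟨l.val - q.val - 2, by omega⟩, ?_⟩
      simp only [hjj]
      rw [dif_neg (show ¬(l.val - q.val - 2 = N - q.val - 2) by omega)]
      exact congrArg u (Fin.ext (show q.val + 2 + (l.val - q.val - 2) = l.val by omega))
  have hqq' : u q < u q' := hu (Fin.lt_def.mpr (by omega))
  refine ⟨q.val, N - q.val - 2, ii, jj, u q, u q', hiimono, hjjmono,
    hii_lt _, hqq', hjj_gt _, ?_, ?_⟩
  · -- the two types differ
    intro hall
    apply hne
    set c0 : Fin N → M := fun l =>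
      if l.val = q.val ∨ l.val = q.val + 1 then a (ii ⟨0, Nat.succ_pos _⟩)
      else a (u l) with hc0
    set hmap : Fin N × Fin 1 → (Fin 1 ⊕ Fin 1) ⊕ Fin N := fun p =>
      if p.1.val = q.val then Sum.inl (Sum.inl 0)
      else if p.1.val = q.val + 1 then Sum.inl (Sum.inr 0)
      else Sum.inr p.1 with hhmap
    have hc0mem : ∀ l, c0 l ∈
        Set.range (fun l' => a (ii l')) ∪ Set.range (fun l' => a (jj l')) := by
      intro l
      simp only [hc0]
      split_ifs with h
      · exact Or.inl ⟨⟨0, Nat.succ_pos _⟩, rfl⟩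
      · push_neg at h
        rcases hcover l h.1 h.2 with ⟨l', hl'⟩ | ⟨l', hl'⟩
        · exact Or.inl ⟨l', congrArg a hl'⟩
        · exact Or.inr ⟨l', congrArg a hl'⟩
    have h := hall N (χ.relabel hmap) c0 hc0mem
    rw [Formula.realize_relabel, Formula.realize_relabel] at h
    have e1 : (Sum.elim (Sum.elim (fun _ : Fin 1 => a (u q)) (fun _ : Fin 1 => a (u q'))) c0)
        ∘ hmap = fun p : Fin N × Fin 1 => a (u p.1) := by
      funext p
      simp only [Function.comp_apply, hhmap]
      by_cases hp1 : p.1.val = q.val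
      · rw [if_pos hp1]
        exact congrArg (fun z => a (u z)) (Fin.ext hp1).symm
      · rw [if_neg hp1]
        by_cases hp2 : p.1.val = q.val + 1
        · rw [if_pos hp2]
          exact congrArg (fun z => a (u z)) (Fin.ext (show q'.val = p.1.val by omega))
        · rw [if_neg hp2]
          simp only [Sum.elim_inr, hc0]
          rw [if_neg (by omega)]
    have e2 : (Sum.elim (Sum.elim (fun _ : Fin 1 => a (u q')) (fun _ : Fin 1 => a (u q))) c0)
        ∘ hmap = fun p : Fin N × Fin 1 => a (u (Equiv.swap q q' p.1)) := by
      funext p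
      simp only [Function.comp_apply, hhmap]
      by_cases hp1 : p.1.val = q.val
      · rw [if_pos hp1]
        have : p.1 = q := Fin.ext hp1
        rw [this, Equiv.swap_apply_left]
        rfl
      · rw [if_neg hp1]
        by_cases hp2 : p.1.val = q.val + 1
        · rw [if_pos hp2]
          have : p.1 = q' := Fin.ext (by omega)
          rw [this, Equiv.swap_apply_right]
          rfl
        · rw [if_neg hp2]
          simp only [Sum.elim_inr, hc0]
          rw [if_neg (by omega)]
          rw [Equiv.swap_apply_of_ne_of_ne
            (fun hh => hp1 (congrArg Fin.val hh))
            (fun hh => hp2 (by rw [congrArg Fin.val hh]; omega))]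
    rw [e1, e2] at h
    exact h.symm
  · -- order property
    intro k ψ c hc h1 h2
    have hwex : ∀ l, ∃ z, c l = a z ∧ (z ≤ ii (Fin.last q.val) ∨ jj 0 ≤ z) := by
      intro l
      rcases hc l with ⟨l', hl'⟩ | ⟨l', hl'⟩
      · exact ⟨ii l', hl'.symm, Or.inl (hiimono.monotone (Fin.le_last _))⟩
      · exact ⟨jj l', hl'.symm, Or.inr (hjjmono.monotone (Fin.zero_le _))⟩
    choose w hw hws using hwex
    have hIq : ii (Fin.last q.val) < u q := hii_lt _
    have hqJ : u q' < jj 0 := hjj_gt _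
    set I : ℚ := ii (Fin.last q.val) with hIdef
    set J : ℚ := jj 0 with hJdef
    set V : ℚ → ℚ → Fin (k + 2) → ℚ := fun s t x =>
      if h2 : 2 ≤ x.val then w ⟨x.val - 2, by have := x.isLt; omega⟩
      else if x.val = 0 then s else t with hV
    set e : (Fin 1 ⊕ Fin 1) ⊕ Fin k → Fin (k + 2) × Fin 1 :=
      Sum.elim (Sum.elim (fun _ => (⟨0, by omega⟩, 0)) (fun _ => (⟨1, by omega⟩, 0)))
        (fun l => (⟨l.val + 2, by have := l.isLt; omega⟩, 0)) with he
    have hV0 : ∀ s t (x : Fin (k + 2)), x.val = 0 → V s t x = s := by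
      intro s t x hx
      simp only [hV]
      rw [dif_neg (by omega), if_pos hx]
    have hV1 : ∀ s t (x : Fin (k + 2)), x.val = 1 → V s t x = t := by
      intro s t x hx
      simp only [hV]
      rw [dif_neg (by omega), if_neg (by omega)]
    have hVw : ∀ s t (x : Fin (k + 2)) (hx : 2 ≤ x.val),
        V s t x = w ⟨x.val - 2, by have := x.isLt; omega⟩ := by
      intro s t x hx
      simp only [hV]
      rw [dif_pos hx]
    have hseq : ∀ (ψ₀ : L.Formula ((Fin 1 ⊕ Fin 1) ⊕ Fin k)) (s t : ℚ),
        ((ψ₀.relabel e).Realize (fun p : Fin (k + 2) × Fin 1 => a (V s t p.1)) ↔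
          ψ₀.Realize (Sum.elim (Sum.elim (fun _ => a s) (fun _ => a t)) c)) := by
      intro ψ₀ s t
      rw [Formula.realize_relabel]
      refine realize_congr' ψ₀ (funext fun x => ?_)
      rcases x with (x | x) | x
      · show a (V s t ⟨0, by omega⟩) = a s
        rw [hV0 s t _ rfl]
      · show a (V s t ⟨1, by omega⟩) = a t
        rw [hV1 s t _ rfl]
      · show a (V s t ⟨x.val + 2, by have := x.isLt; omega⟩) = c x
        rw [hVw s t _ (Nat.le_add_left 2 x.val)]
        exact (congrArg (fun z => a (w z))
          (Fin.ext (show x.val + 2 - 2 = x.val by omega))).trans (hw x).symm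
    have ptrans : ∀ (ψ₀ : L.Formula ((Fin 1 ⊕ Fin 1) ⊕ Fin k)) (s t : ℚ),
        I < s → s < t → t < J →
        (ψ₀.Realize (Sum.elim (Sum.elim (fun _ => a s) (fun _ => a t)) c) ↔
          ψ₀.Realize (Sum.elim (Sum.elim (fun _ => a (u q)) (fun _ => a (u q'))) c)) := by
      intro ψ₀ s t hs hst ht
      have hws' : ∀ (l : Fin k),
          (s ≤ w l ↔ u q ≤ w l) ∧ (w l ≤ s ↔ w l ≤ u q) ∧
          (t ≤ w l ↔ u q' ≤ w l) ∧ (w l ≤ t ↔ w l ≤ u q') := by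
        intro l
        rcases hws l with h | h
        · exact ⟨iff_of_false (by linarith) (by linarith),
            iff_of_true (by linarith) (by linarith),
            iff_of_false (by linarith) (by linarith),
            iff_of_true (by linarith) (by linarith)⟩
        · exact ⟨iff_of_true (by linarith) (by linarith),
            iff_of_false (by linarith) (by linarith),
            iff_of_true (by linarith) (by linarith),
            iff_of_false (by linarith) (by linarith)⟩
      have hmatch : ∀ x y : Fin (k + 2),
          V s t x ≤ V s t y ↔ V (u q) (u q') x ≤ V (u q) (u q') y := by
        intro x y
        rcases (show x.val = 0 ∨ x.val = 1 ∨ 2 ≤ x.val by have := x.isLt; omega)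
          with hx | hx | hx <;>
        rcases (show y.val = 0 ∨ y.val = 1 ∨ 2 ≤ y.val by have := y.isLt; omega)
          with hy | hy | hy
        · rw [hV0 s t x hx, hV0 s t y hy, hV0 (u q) (u q') x hx, hV0 (u q) (u q') y hy]
          exact iff_of_true le_rfl le_rfl
        · rw [hV0 s t x hx, hV1 s t y hy, hV0 (u q) (u q') x hx, hV1 (u q) (u q') y hy]
          exact iff_of_true hst.le hqq'.le
        · rw [hV0 s t x hx, hVw s t y hy, hV0 (u q) (u q') x hx, hVw (u q) (u q') y hy]
          exact (hws' _).1
        · rw [hV1 s t x hx, hV0 s t y hy, hV1 (u q) (u q') x hx, hV0 (u q) (u q') y hy]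
          exact iff_of_false (by linarith) (by linarith)
        · rw [hV1 s t x hx, hV1 s t y hy, hV1 (u q) (u q') x hx, hV1 (u q) (u q') y hy]
          exact iff_of_true le_rfl le_rfl
        · rw [hV1 s t x hx, hVw s t y hy, hV1 (u q) (u q') x hx, hVw (u q) (u q') y hy]
          exact (hws' _).2.2.1
        · rw [hVw s t x hx, hV0 s t y hy, hVw (u q) (u q') x hx, hV0 (u q) (u q') y hy]
          exact (hws' _).2.1
        · rw [hVw s t x hx, hV1 s t y hy, hVw (u q) (u q') x hx, hV1 (u q) (u q') y hy]
          exact (hws' _).2.2.2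
        · rw [hVw s t x hx, hVw s t y hy, hVw (u q) (u q') x hx, hVw (u q) (u q') y hy]
      exact (hseq ψ₀ s t).symm.trans
        ((aux_gen hind _ _ hmatch (ψ₀.relabel e)).trans (hseq ψ₀ (u q) (u q')))
    set sw : (Fin 1 ⊕ Fin 1) ⊕ Fin k → (Fin 1 ⊕ Fin 1) ⊕ Fin k :=
      Sum.elim (Sum.elim (fun _ => Sum.inl (Sum.inr 0)) (fun _ => Sum.inl (Sum.inl 0)))
        Sum.inr with hsw
    have hswr : ∀ (x y : M),
        ((ψ.relabel sw).Realize (Sum.elim (Sum.elim (fun _ => x) (fun _ => y)) c) ↔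
          ψ.Realize (Sum.elim (Sum.elim (fun _ => y) (fun _ => x)) c)) := by
      intro x y
      rw [Formula.realize_relabel]
      exact realize_congr' ψ (funext fun z => by rcases z with (z | z) | z <;> rfl)
    set tk : ℕ → ℚ := fun k' => u q + (u q' - u q) * (k' / (k' + 1)) with htk
    have htkmono : StrictMono tk := by
      apply strictMono_nat_of_lt_succ
      intro n'
      simp only [htk]
      have hp1 : (0:ℚ) < (n' : ℚ) + 1 := by positivity
      have hp2 : (0:ℚ) < (n' : ℚ) + 1 + 1 := by positivity
      have hdiv : (n' : ℚ) / ((n' : ℚ) + 1) < ((n' : ℚ) + 1) / ((n' : ℚ) + 1 + 1) := by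
        rw [div_lt_div_iff₀ hp1 hp2]
        nlinarith
      have hm := mul_lt_mul_of_pos_left hdiv (show (0:ℚ) < u q' - u q by linarith)
      push_cast
      linarith
    have htklb : ∀ k', u q ≤ tk k' := by
      intro k'
      simp only [htk]
      have h0 : (0:ℚ) ≤ (k' : ℚ) / ((k' : ℚ) + 1) := by positivity
      nlinarith
    have htkub : ∀ k', tk k' < u q' := by
      intro k'
      simp only [htk]
      have h0 : (k' : ℚ) / ((k' : ℚ) + 1) < 1 := by
        rw [div_lt_one (by positivity)]
        linarith
      nlinarith
    refine ⟨⟨M, FirstOrder.Language.ElementaryEmbedding.refl L M⟩,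
      fun i' _ => a (tk (2 * i' + 1)), fun j' _ => a (tk (2 * j')), ?_⟩
    intro i' j'
    show ψ.Realize (Sum.elim (Sum.elim (fun _ => a (tk (2 * i' + 1)))
      (fun _ => a (tk (2 * j')))) c) ↔ i' < j'
    by_cases hij : i' < j'
    · have hlt : tk (2 * i' + 1) < tk (2 * j') := htkmono (by omega)
      exact iff_of_true
        ((ptrans ψ _ _ (lt_of_lt_of_le hIq (htklb _)) hlt ((htkub _).trans hqJ)).mpr h1) hij
    · have hlt : tk (2 * j') < tk (2 * i' + 1) := htkmono (by omega)
      refine iff_of_false ?_ hij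
      intro hreal
      apply h2
      have hsw1 : (ψ.relabel sw).Realize (Sum.elim (Sum.elim (fun _ => a (tk (2 * j')))
          (fun _ => a (tk (2 * i' + 1)))) c) := (hswr _ _).mpr hreal
      have hfin := (ptrans (ψ.relabel sw) _ _ (lt_of_lt_of_le hIq (htklb _)) hlt
        ((htkub _).trans hqJ)).mp hsw1
      exact (hswr _ _).mp hfin
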